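/- Let u₁, …, u_l ∈ U(n) with u₁⋯u_l = 1. Then there exist Lagrangian subspaces L₁ = ℝⁿ, L₂, …, L_l of ℂⁿ with u_j = σ_{L_j} σ_{L_{j+1}} for all j (indices mod l, σ_{L_{l+1}} = σ_{L₁}) if and only if u_l = u_lᵗ, u_{l−1} = ū_l⁻¹ u_{l−1}ᵗ ū_l, …, and u₁ = ū_l⁻¹ ū_{l−1}⁻¹ ⋯ ū₂⁻¹ u₁ᵗ ū₂ ⋯ ū_{l−1} ū_l. -/

import Mathlib

open Matrix

/-- The standard Hermitian product on `ℂⁿ`. -/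
noncomputable def hermP {n : ℕ} (z w : Fin n → ℂ) : ℂ :=
  ∑ i, z i * (starRingEnd ℂ) (w i)

/-- The standard symplectic form `ω = -Im h` on `ℂⁿ` viewed as a real vector space. -/
noncomputable def omegaP {n : ℕ} (z w : Fin n → ℂ) : ℝ := -(hermP z w).im

/-- A real subspace of `ℂⁿ` is Lagrangian if `ω` vanishes on it and its real dimension is `n`. -/
def IsLagrangian {n : ℕ} (L : Submodule ℝ (Fin n → ℂ)) : Prop :=
  (∀ z ∈ L, ∀ w ∈ L, omegaP z w = 0) ∧ Module.finrank ℝ (↥L) = n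

/-- The standard Lagrangian `L₀ = ℝⁿ ⊂ ℂⁿ`, as a set. -/
def L0set (n : ℕ) : Set (Fin n → ℂ) := {z | ∀ i, (z i).im = 0}

/-- `σ` is the Lagrangian involution associated to `L`: the real-linear map equal to the
identity on `L` and to `-Id` on `iL`. -/
def IsLagInv {n : ℕ} (L : Submodule ℝ (Fin n → ℂ))
    (σ : (Fin n → ℂ) →ₗ[ℝ] (Fin n → ℂ)) : Prop :=
  (∀ z ∈ L, σ z = z) ∧ (∀ z ∈ L, σ (Complex.I • z) = -(Complex.I • z))

/-- Entrywise complex conjugation of a matrix. -/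
noncomputable def conjMat {n : ℕ} (u : Matrix (Fin n) (Fin n) ℂ) : Matrix (Fin n) (Fin n) ℂ :=
  u.map (starRingEnd ℂ)

/-- The ordered partial product `u_j u_{j+1} ⋯ u_{l-1}` (0-based indexing). -/
noncomputable def tailProd (n l : ℕ) (u : Fin l → Matrix (Fin n) (Fin n) ℂ) (j : ℕ) :
    Matrix (Fin n) (Fin n) ℂ :=
  (((List.finRange l).drop j).map u).prod

variable {n l : ℕ}

lemma conjMat_conjMat (A : Matrix (Fin n) (Fin n) ℂ) : conjMat (conjMat A) = A := by
  ext i j; simp only [conjMat, Matrix.map_apply, Complex.conj_conj]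

lemma conjMat_eq_star_transpose (A : Matrix (Fin n) (Fin n) ℂ) : conjMat A = (star A)ᵀ := by
  ext i j
  simp only [conjMat, Matrix.map_apply, Matrix.transpose_apply, Matrix.star_apply]
  rfl

lemma star_eq_conjMat_of_symm {T : Matrix (Fin n) (Fin n) ℂ} (hs : Tᵀ = T) :
    star T = conjMat T := by
  rw [conjMat_eq_star_transpose, ← hs]
  ext i j
  simp only [Matrix.transpose_apply, Matrix.star_apply]
  have h2 := congrFun (congrFun hs i) j
  rw [Matrix.transpose_apply] at h2
  rw [h2]

lemma conjMat_eq_inv {T : Matrix (Fin n) (Fin n) ℂ} (hT : T ∈ Matrix.unitaryGroup (Fin n) ℂ)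
    (hs : Tᵀ = T) : conjMat T = T⁻¹ := by
  rw [← star_eq_conjMat_of_symm hs]
  exact (Matrix.inv_eq_left_inv (Matrix.mem_unitaryGroup_iff'.mp hT)).symm

lemma mul_conjMat_of_symm {T : Matrix (Fin n) (Fin n) ℂ} (hT : T ∈ Matrix.unitaryGroup (Fin n) ℂ)
    (hs : Tᵀ = T) : T * conjMat T = 1 := by
  rw [← star_eq_conjMat_of_symm hs]; exact Matrix.mem_unitaryGroup_iff.mp hT

lemma conjMat_mul_of_symm {T : Matrix (Fin n) (Fin n) ℂ} (hT : T ∈ Matrix.unitaryGroup (Fin n) ℂ)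
    (hs : Tᵀ = T) : conjMat T * T = 1 := by
  rw [← star_eq_conjMat_of_symm hs]; exact Matrix.mem_unitaryGroup_iff'.mp hT

lemma inv_conjMat_of_symm {T : Matrix (Fin n) (Fin n) ℂ} (hT : T ∈ Matrix.unitaryGroup (Fin n) ℂ)
    (hs : Tᵀ = T) : (conjMat T)⁻¹ = T :=
  Matrix.inv_eq_left_inv (mul_conjMat_of_symm hT hs)

lemma mulVec_eq_one {A : Matrix (Fin n) (Fin n) ℂ} (h : ∀ z, A.mulVec z = z) : A = 1 := by
  ext i j
  have := congrFun (h (Pi.single j 1)) i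
  simp only [Matrix.mulVec_single, mul_one, MulOpposite.op_one, one_smul, Matrix.col_apply] at this
  rw [this, Matrix.one_apply]
  by_cases h : i = j <;> simp [Pi.single_apply, h, eq_comm]

lemma star_mulVec_star (A : Matrix (Fin n) (Fin n) ℂ) (v : Fin n → ℂ) :
    star (A.mulVec (star v)) = (conjMat A).mulVec v := by
  funext i
  simp [Matrix.mulVec, dotProduct, conjMat, map_sum]

-- tailProd lemmas
lemma tailProd_succ (u : Fin l → Matrix (Fin n) (Fin n) ℂ) {k : ℕ} (hk : k < l) :
    tailProd n l u k = u ⟨k, hk⟩ * tailProd n l u (k + 1) := by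
  unfold tailProd
  rw [List.drop_eq_getElem_cons (by simpa using hk)]
  simp

lemma tailProd_ge (u : Fin l → Matrix (Fin n) (Fin n) ℂ) {k : ℕ} (hk : l ≤ k) :
    tailProd n l u k = 1 := by
  unfold tailProd
  rw [List.drop_eq_nil_of_le (by simpa using hk)]
  simp

lemma tailProd_mem (u : Fin l → Matrix (Fin n) (Fin n) ℂ)
    (hu : ∀ j, u j ∈ Matrix.unitaryGroup (Fin n) ℂ) (k : ℕ) :
    tailProd n l u k ∈ Matrix.unitaryGroup (Fin n) ℂ := by
  apply Submonoid.list_prod_mem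
  intro x hx
  obtain ⟨j, _, rfl⟩ := List.mem_map.mp hx
  exact hu j

noncomputable def headProd (u : Fin l → Matrix (Fin n) (Fin n) ℂ) (k : ℕ) :
    Matrix (Fin n) (Fin n) ℂ :=
  (((List.finRange l).map u).take k).prod

lemma headProd_zero (u : Fin l → Matrix (Fin n) (Fin n) ℂ) : headProd u 0 = 1 := by
  simp [headProd]

lemma headProd_succ (u : Fin l → Matrix (Fin n) (Fin n) ℂ) {k : ℕ} (hk : k < l) :
    headProd u (k + 1) = headProd u k * u ⟨k, hk⟩ := by
  unfold headProd
  rw [List.prod_take_succ _ _ (by simpa using hk)]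
  congr 1
  simp

lemma headProd_mul_tailProd (u : Fin l → Matrix (Fin n) (Fin n) ℂ) (k : ℕ) :
    headProd u k * tailProd n l u k = tailProd n l u 0 := by
  unfold headProd tailProd
  rw [List.drop_zero, List.map_drop, ← List.prod_append, List.take_append_drop]

lemma headProd_mem (u : Fin l → Matrix (Fin n) (Fin n) ℂ)
    (hu : ∀ j, u j ∈ Matrix.unitaryGroup (Fin n) ℂ) (k : ℕ) :
    headProd u k ∈ Matrix.unitaryGroup (Fin n) ℂ := by
  apply Submonoid.list_prod_mem
  intro x hx
  obtain ⟨y, _, rfl⟩ := List.mem_map.mp (List.mem_of_mem_take hx)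
  exact hu y

-- the candidate involution z ↦ T (star z), as a real-linear map
noncomputable def sigmaMap (T : Matrix (Fin n) (Fin n) ℂ) :
    (Fin n → ℂ) →ₗ[ℝ] (Fin n → ℂ) where
  toFun z := T.mulVec (star z)
  map_add' z w := by rw [star_add, Matrix.mulVec_add]
  map_smul' c z := by
    have h : star (c • z) = (c : ℂ) • star z := by
      funext i
      simp [Complex.real_smul]
    rw [h, Matrix.mulVec_smul]
    funext i
    simp [Complex.real_smul]

lemma sigmaMap_apply (T : Matrix (Fin n) (Fin n) ℂ) (z : Fin n → ℂ) :
    sigmaMap T z = T.mulVec (star z) := rfl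

lemma sigmaMap_sigmaMap {T : Matrix (Fin n) (Fin n) ℂ}
    (hT : T ∈ Matrix.unitaryGroup (Fin n) ℂ) (hs : Tᵀ = T) (z : Fin n → ℂ) :
    sigmaMap T (sigmaMap T z) = z := by
  rw [sigmaMap_apply, sigmaMap_apply, ← star_star z, star_mulVec_star,
    Matrix.mulVec_mulVec, star_star z, mul_conjMat_of_symm hT hs, Matrix.one_mulVec]

lemma sigmaMap_smul_I (T : Matrix (Fin n) (Fin n) ℂ) (z : Fin n → ℂ) :
    sigmaMap T (Complex.I • z) = -(Complex.I • sigmaMap T z) := by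
  rw [sigmaMap_apply, sigmaMap_apply]
  have h : star (Complex.I • z) = (-Complex.I) • star z := by
    funext i; simp [Complex.conj_I]
  rw [h, Matrix.mulVec_smul, neg_smul]

noncomputable def fixedSub (T : Matrix (Fin n) (Fin n) ℂ) : Submodule ℝ (Fin n → ℂ) :=
  LinearMap.ker (sigmaMap T - LinearMap.id)

lemma mem_fixedSub {T : Matrix (Fin n) (Fin n) ℂ} {z : Fin n → ℂ} :
    z ∈ fixedSub T ↔ sigmaMap T z = z := by
  simp [fixedSub, LinearMap.mem_ker, sub_eq_zero]

noncomputable def negSub (T : Matrix (Fin n) (Fin n) ℂ) : Submodule ℝ (Fin n → ℂ) :=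
  LinearMap.ker (sigmaMap T + LinearMap.id)

lemma mem_negSub {T : Matrix (Fin n) (Fin n) ℂ} {z : Fin n → ℂ} :
    z ∈ negSub T ↔ sigmaMap T z = -z := by
  simp [negSub, LinearMap.mem_ker]
  constructor
  · intro h; linear_combination (norm := module) h
  · intro h; linear_combination (norm := module) h

lemma finrank_pi_complex : Module.finrank ℝ (Fin n → ℂ) = 2 * n := by
  rw [Module.finrank_pi_fintype]
  simp [Complex.finrank_real_complex, mul_comm]

noncomputable def eI : (Fin n → ℂ) ≃ₗ[ℝ] (Fin n → ℂ) where
  toFun z := Complex.I • z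
  invFun z := -(Complex.I • z)
  map_add' z w := smul_add _ z w
  map_smul' c z := by rw [RingHom.id_apply, smul_comm]
  left_inv z := by
    show -(Complex.I • Complex.I • z) = z
    rw [smul_smul, Complex.I_mul_I, neg_smul, one_smul, neg_neg]
  right_inv z := by
    show Complex.I • -(Complex.I • z) = z
    rw [smul_neg, smul_smul, Complex.I_mul_I, neg_smul, one_smul, neg_neg]

lemma negSub_eq_map (T : Matrix (Fin n) (Fin n) ℂ) :
    negSub T = (fixedSub T).map eI.toLinearMap := by
  ext z
  simp only [Submodule.mem_map, mem_negSub, mem_fixedSub]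
  constructor
  · intro hz
    refine ⟨-(Complex.I • z), ?_, ?_⟩
    · rw [map_neg, sigmaMap_smul_I, neg_neg, hz, smul_neg]
    · show Complex.I • (-(Complex.I • z)) = z
      rw [smul_neg, smul_smul, Complex.I_mul_I, neg_smul, neg_neg, one_smul]
  · rintro ⟨w, hw, rfl⟩
    show sigmaMap T (Complex.I • w) = -(Complex.I • w)
    rw [sigmaMap_smul_I, hw]

lemma finrank_fixedSub {T : Matrix (Fin n) (Fin n) ℂ}
    (hT : T ∈ Matrix.unitaryGroup (Fin n) ℂ) (hs : Tᵀ = T) :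
    Module.finrank ℝ (fixedSub T) = n := by
  have hdisj : fixedSub T ⊓ negSub T = ⊥ := by
    rw [Submodule.eq_bot_iff]
    intro z hz
    obtain ⟨h1, h2⟩ := Submodule.mem_inf.mp hz
    rw [mem_fixedSub] at h1
    rw [mem_negSub] at h2
    have h4 : z + z = 0 := by
      nth_rewrite 2 [h1.symm.trans h2]
      abel
    have h3 : (2 : ℝ) • z = 0 := (two_smul ℝ z).trans h4
    simpa using smul_eq_zero.mp h3
  have hsup : fixedSub T ⊔ negSub T = ⊤ := by
    rw [Submodule.eq_top_iff']
    intro z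
    have hz : z = (1/2 : ℝ) • (z + sigmaMap T z) + (1/2 : ℝ) • (z - sigmaMap T z) := by
      module
    rw [hz]
    refine Submodule.add_mem _ (Submodule.mem_sup_left ?_) (Submodule.mem_sup_right ?_)
    · rw [mem_fixedSub, _root_.map_smul, map_add, sigmaMap_sigmaMap hT hs, add_comm]
    · rw [mem_negSub, _root_.map_smul, map_sub, sigmaMap_sigmaMap hT hs, ← smul_neg, neg_sub]
  have hfr := Submodule.finrank_sup_add_finrank_inf_eq (fixedSub T) (negSub T)
  rw [hdisj, hsup, finrank_bot, finrank_top, finrank_pi_complex, add_zero] at hfr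
  have heq : Module.finrank ℝ (negSub T) = Module.finrank ℝ (fixedSub T) := by
    rw [negSub_eq_map]
    exact LinearEquiv.finrank_map_eq eI (fixedSub T)
  rw [heq] at hfr
  omega

lemma hermP_eq_dot (z w : Fin n → ℂ) : hermP z w = z ⬝ᵥ star w := by
  simp [hermP, dotProduct]

lemma hermP_mulVec {T : Matrix (Fin n) (Fin n) ℂ}
    (hT : T ∈ Matrix.unitaryGroup (Fin n) ℂ) (z w : Fin n → ℂ) :
    hermP (T.mulVec z) (T.mulVec w) = hermP z w := by
  rw [hermP_eq_dot, hermP_eq_dot, Matrix.star_mulVec, dotProduct_comm,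
    Matrix.dotProduct_mulVec, Matrix.vecMul_vecMul]
  rw [show Tᴴ * T = 1 from Matrix.mem_unitaryGroup_iff'.mp hT, Matrix.vecMul_one,
    dotProduct_comm]

lemma hermP_star (z w : Fin n → ℂ) : hermP (star z) (star w) = (starRingEnd ℂ) (hermP z w) := by
  simp only [hermP, map_sum, Pi.star_apply]
  congr 1; funext i
  simp [Complex.star_def, mul_comm]

lemma omega_fixedSub {T : Matrix (Fin n) (Fin n) ℂ}
    (hT : T ∈ Matrix.unitaryGroup (Fin n) ℂ) :
    ∀ z ∈ fixedSub T, ∀ w ∈ fixedSub T, omegaP z w = 0 := by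
  intro z hz w hw
  rw [mem_fixedSub, sigmaMap_apply] at hz hw
  have h : hermP z w = (starRingEnd ℂ) (hermP z w) := by
    conv_lhs => rw [← hz, ← hw, hermP_mulVec hT, hermP_star]
  have him : (hermP z w).im = 0 := Complex.conj_eq_iff_im.mp h.symm
  rw [omegaP, him, neg_zero]

lemma isLagrangian_fixedSub {T : Matrix (Fin n) (Fin n) ℂ}
    (hT : T ∈ Matrix.unitaryGroup (Fin n) ℂ) (hs : Tᵀ = T) :
    IsLagrangian (fixedSub T) :=
  ⟨omega_fixedSub hT, finrank_fixedSub hT hs⟩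

lemma isLagInv_fixedSub (T : Matrix (Fin n) (Fin n) ℂ) :
    IsLagInv (fixedSub T) (sigmaMap T) := by
  refine ⟨fun z hz => mem_fixedSub.mp hz, fun z hz => ?_⟩
  rw [sigmaMap_smul_I, mem_fixedSub.mp hz]

lemma conjMat_star (A : Matrix (Fin n) (Fin n) ℂ) : conjMat (star A) = Aᵀ := by
  ext i j
  simp [conjMat, Matrix.star_apply]

lemma beta_step {a T S : Matrix (Fin n) (Fin n) ℂ}
    (hT : T ∈ Matrix.unitaryGroup (Fin n) ℂ) (hTs : Tᵀ = T) (hSs : Sᵀ = S)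
    (hrel : S = a * T) : a = (conjMat T)⁻¹ * aᵀ * conjMat T := by
  have hstar : conjMat T = star T := (star_eq_conjMat_of_symm hTs).symm
  have ha : a = S * star T := by
    rw [hrel, mul_assoc, Matrix.mem_unitaryGroup_iff.mp hT, mul_one]
  have hstT : (star T)ᵀ = star T := by
    rw [← conjMat_eq_star_transpose, hstar]
  have haT : aᵀ = star T * S := by
    rw [ha, Matrix.transpose_mul, hSs, hstT]
  rw [inv_conjMat_of_symm hT hTs, hstar, haT, ← mul_assoc,
    Matrix.mem_unitaryGroup_iff.mp hT, one_mul, ← ha]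

lemma tailProd_symm_of_beta (u : Fin l → Matrix (Fin n) (Fin n) ℂ)
    (hu : ∀ j, u j ∈ Matrix.unitaryGroup (Fin n) ℂ)
    (hβ : ∀ j : Fin l,
      u j = (conjMat (tailProd n l u ((j : ℕ) + 1)))⁻¹ * (u j)ᵀ *
        conjMat (tailProd n l u ((j : ℕ) + 1))) :
    ∀ k, (tailProd n l u k)ᵀ = tailProd n l u k := by
  suffices h : ∀ m k, l ≤ k + m → (tailProd n l u k)ᵀ = tailProd n l u k by
    intro k; exact h l k (by omega)
  intro m
  induction m with
  | zero => intro k hk; rw [tailProd_ge u (by omega)]; exact Matrix.transpose_one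
  | succ m ih =>
    intro k hk
    rcases Nat.lt_or_ge k l with hkl | hkl
    · have hT := ih (k + 1) (by omega)
      have hTu := tailProd_mem u hu (k + 1)
      have hb := hβ ⟨k, hkl⟩
      rw [tailProd_succ u hkl]
      rw [Matrix.transpose_mul, hT]
      conv_rhs => rw [hb]
      rw [inv_conjMat_of_symm hTu hT, ← star_eq_conjMat_of_symm hT,
        mul_assoc (tailProd n l u (k + 1) * (u ⟨k, hkl⟩)ᵀ) (star (tailProd n l u (k + 1))) _,
        Matrix.mem_unitaryGroup_iff'.mp hTu, mul_one]
    · rw [tailProd_ge u hkl]; exact Matrix.transpose_one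

lemma laginv_invol {L : Submodule ℝ (Fin n → ℂ)} {σ : (Fin n → ℂ) →ₗ[ℝ] (Fin n → ℂ)}
    (hL : IsLagrangian L) (hσ : IsLagInv L σ) : ∀ z, σ (σ z) = z := by
  have hrank : Module.finrank ℝ (L.map (eI.toLinearMap : (Fin n → ℂ) →ₗ[ℝ] Fin n → ℂ)) = n := by
    rw [LinearEquiv.finrank_map_eq eI L, hL.2]
  have hdisj : L ⊓ L.map eI.toLinearMap = ⊥ := by
    rw [Submodule.eq_bot_iff]
    intro z hz
    obtain ⟨hz1, hz2⟩ := Submodule.mem_inf.mp hz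
    obtain ⟨w, hw, hwz⟩ := hz2
    have hz' : z = Complex.I • w := by rw [← hwz]; rfl
    have hom := hL.1 w hw z hz1
    rw [hz'] at hom
    have hcomp : omegaP w (Complex.I • w) = ∑ i, Complex.normSq (w i) := by
      rw [omegaP, hermP]
      rw [Complex.im_sum]
      rw [← Finset.sum_neg_distrib]
      congr 1; funext i
      simp [Complex.mul_conj, Complex.conj_I]
      ring_nf
      simp [Complex.normSq]
      ring
    rw [hcomp] at hom
    have hall : ∀ i ∈ Finset.univ, Complex.normSq (w i) = 0 := by
      intro i _
      have := (Finset.sum_eq_zero_iff_of_nonneg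
        (fun i _ => Complex.normSq_nonneg (w i))).mp hom
      exact this i (Finset.mem_univ i)
    have hw0 : w = 0 := by
      funext i
      exact Complex.normSq_eq_zero.mp (hall i (Finset.mem_univ i))
    rw [hz', hw0, smul_zero]
  have hsup : L ⊔ L.map eI.toLinearMap = ⊤ := by
    have hfr := Submodule.finrank_sup_add_finrank_inf_eq L (L.map eI.toLinearMap)
    rw [hdisj, finrank_bot, add_zero, hL.2, hrank] at hfr
    apply Submodule.eq_top_of_finrank_eq
    rw [hfr, finrank_pi_complex]
    omega
  intro z
  have hz : z ∈ L ⊔ L.map eI.toLinearMap := hsup ▸ Submodule.mem_top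
  obtain ⟨a, ha, b, hb, rfl⟩ := Submodule.mem_sup.mp hz
  obtain ⟨w, hw, rfl⟩ := hb
  have hew : eI.toLinearMap w = Complex.I • w := rfl
  rw [hew, map_add, hσ.1 a ha, hσ.2 w hw, map_add, hσ.1 a ha, map_neg, hσ.2 w hw, neg_neg]

lemma fin_zero_mk {l : ℕ} [NeZero l] (h : 0 < l) : (⟨0, h⟩ : Fin l) = 0 := by
  apply Fin.ext; simp

/-- Under `u₁⋯u_l = 1`, the tuple `(u₁,…,u_l)` of unitary matrices is
`σ₀`-Lagrangian (i.e. there are Lagrangian subspaces `L₁ = ℝⁿ, L₂, …, L_l` with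
`u_j = σ_{L_j} σ_{L_{j+1}}` cyclically) iff it is fixed by the involution `β`, i.e.
`u_j = ū_l⁻¹ ⋯ ū_{j+1}⁻¹ u_jᵀ ū_{j+1} ⋯ ū_l` for every `j`. -/
theorem stmt_17 (n l : ℕ) [NeZero l] (u : Fin l → Matrix (Fin n) (Fin n) ℂ)
    (hu : ∀ j, u j ∈ Matrix.unitaryGroup (Fin n) ℂ)
    (hprod : tailProd n l u 0 = 1) :
    (∃ (L : Fin l → Submodule ℝ (Fin n → ℂ))
        (σ : Fin l → ((Fin n → ℂ) →ₗ[ℝ] (Fin n → ℂ))),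
      ((L 0 : Set (Fin n → ℂ)) = L0set n) ∧
      (∀ j, IsLagrangian (L j)) ∧
      (∀ j, IsLagInv (L j) (σ j)) ∧
      (∀ j : Fin l, ∀ z : Fin n → ℂ, (u j).mulVec z = σ j (σ (j + 1) z))) ↔
    (∀ j : Fin l,
      u j = (conjMat (tailProd n l u ((j : ℕ) + 1)))⁻¹ * (u j)ᵀ *
        conjMat (tailProd n l u ((j : ℕ) + 1))) := by
  constructor
  · rintro ⟨L, σ, hL0, hLag, hInv, hrel⟩
    have hinvol : ∀ j z, σ j (σ j z) = z := fun j => laginv_invol (hLag j) (hInv j)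
    have hσ0 : ∀ z, σ 0 z = star z := by
      intro z
      have hre : (fun i => ((z i).re : ℂ)) ∈ L 0 := by
        have h : (fun i => ((z i).re : ℂ)) ∈ (L 0 : Set (Fin n → ℂ)) := by
          rw [hL0]; intro i; simp
        exact h
      have him : (fun i => ((z i).im : ℂ)) ∈ L 0 := by
        have h : (fun i => ((z i).im : ℂ)) ∈ (L 0 : Set (Fin n → ℂ)) := by
          rw [hL0]; intro i; simp
        exact h
      have hz : z = (fun i => ((z i).re : ℂ)) + Complex.I • (fun i => ((z i).im : ℂ)) := by
        funext i
        simp [Complex.ext_iff]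
      conv_lhs => rw [hz]
      rw [map_add, (hInv 0).1 _ hre, (hInv 0).2 _ him]
      funext i
      simp [Complex.ext_iff]
    have hhead : ∀ k (hk : k < l) (z : Fin n → ℂ),
        σ ⟨k, hk⟩ z = star ((headProd u k).mulVec z) := by
      intro k
      induction k with
      | zero =>
        intro hk z
        rw [headProd_zero, Matrix.one_mulVec, fin_zero_mk hk]
        exact hσ0 z
      | succ k ih =>
        intro hk z
        have hk' : k < l := Nat.lt_of_succ_lt hk
        have hadd : (⟨k, hk'⟩ + 1 : Fin l) = ⟨k + 1, hk⟩ := by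
          apply Fin.ext
          rw [Fin.val_add, Fin.val_one', Nat.mod_eq_of_lt (show 1 < l by omega),
            Nat.mod_eq_of_lt hk]
        have hthis := hrel ⟨k, hk'⟩ z
        rw [hadd] at hthis
        have hstep : σ ⟨k + 1, hk⟩ z = σ ⟨k, hk'⟩ ((u ⟨k, hk'⟩).mulVec z) :=
          ((congrArg (σ ⟨k, hk'⟩) hthis).trans (hinvol ⟨k, hk'⟩ _)).symm
        rw [hstep, ih hk' _, Matrix.mulVec_mulVec, ← headProd_succ u hk']
    have hsym : ∀ k, k ≤ l → (tailProd n l u k)ᵀ = tailProd n l u k := by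
      intro k hk
      rcases eq_or_lt_of_le hk with rfl | hk'
      · rw [tailProd_ge u le_rfl]; exact Matrix.transpose_one
      · have hconj : conjMat (headProd u k) * headProd u k = 1 := by
          apply mulVec_eq_one
          intro z
          calc (conjMat (headProd u k) * headProd u k).mulVec z
              = (conjMat (headProd u k)).mulVec ((headProd u k).mulVec z) := by
                rw [Matrix.mulVec_mulVec]
            _ = star ((headProd u k).mulVec (star ((headProd u k).mulVec z))) :=
                (star_mulVec_star _ _).symm
            _ = σ ⟨k, hk'⟩ (σ ⟨k, hk'⟩ z) := by rw [hhead k hk' z, hhead k hk' _]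
            _ = z := hinvol _ _
        have h1 : (headProd u k)⁻¹ = conjMat (headProd u k) := Matrix.inv_eq_left_inv hconj
        have h2 : (headProd u k)⁻¹ = star (headProd u k) :=
          Matrix.inv_eq_left_inv (Matrix.mem_unitaryGroup_iff'.mp (headProd_mem u hu k))
        have h3 : conjMat (headProd u k) = star (headProd u k) := h1.symm.trans h2
        have hhs : (headProd u k)ᵀ = headProd u k := by
          conv_rhs => rw [← conjMat_conjMat (headProd u k), h3, conjMat_star]
        have hp : headProd u k * tailProd n l u k = 1 := by
          rw [headProd_mul_tailProd, hprod]
        have hpinv : (headProd u k)⁻¹ = tailProd n l u k := Matrix.inv_eq_right_inv hp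
        rw [← hpinv, Matrix.transpose_nonsing_inv, hhs]
    intro j
    exact beta_step (tailProd_mem u hu ((j : ℕ) + 1)) (hsym ((j : ℕ) + 1) j.isLt)
      (hsym (j : ℕ) (le_of_lt j.isLt))
      (by rw [tailProd_succ u j.isLt, Fin.eta])
  · intro hβ
    have hsym := tailProd_symm_of_beta u hu hβ
    refine ⟨fun j => fixedSub (tailProd n l u (j : ℕ)),
      fun j => sigmaMap (tailProd n l u (j : ℕ)), ?_, ?_, ?_, ?_⟩
    · have h0 : tailProd n l u ((0 : Fin l) : ℕ) = 1 := by
        rw [Fin.val_zero]; exact hprod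
      ext z
      simp only [SetLike.mem_coe, mem_fixedSub, sigmaMap_apply, h0, Matrix.one_mulVec,
        L0set, Set.mem_setOf_eq]
      constructor
      · intro h i
        exact Complex.conj_eq_iff_im.mp (congrFun h i)
      · intro h
        funext i
        exact Complex.conj_eq_iff_im.mpr (h i)
    · intro j; exact isLagrangian_fixedSub (tailProd_mem u hu _) (hsym _)
    · intro j; exact isLagInv_fixedSub _
    · intro j z
      have hT1 : tailProd n l u ((j + 1 : Fin l) : ℕ) = tailProd n l u ((j : ℕ) + 1) := by
        rcases Nat.lt_or_ge ((j : ℕ) + 1) l with h | h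
        · rw [Fin.val_add, Fin.val_one', Nat.mod_eq_of_lt (show 1 < l by omega),
            Nat.mod_eq_of_lt h]
        · have hj1 : (j : ℕ) + 1 = l := by have := j.isLt; omega
          have hv : ((j + 1 : Fin l) : ℕ) = 0 := by
            rcases Nat.lt_or_ge 1 l with h1 | h1
            · rw [Fin.val_add, Fin.val_one', Nat.mod_eq_of_lt h1, hj1, Nat.mod_self]
            · have hl1 : l = 1 := by have := NeZero.pos l; omega
              subst hl1
              rw [Fin.val_add, Nat.mod_one]
          rw [hv, hprod, tailProd_ge u (le_of_eq hj1.symm)]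
      rw [sigmaMap_apply, sigmaMap_apply, hT1, star_mulVec_star, Matrix.mulVec_mulVec]
      rw [← star_eq_conjMat_of_symm (hsym _), tailProd_succ u j.isLt, Fin.eta, mul_assoc,
        Matrix.mem_unitaryGroup_iff.mp (tailProd_mem u hu ((j : ℕ) + 1)), mul_one]
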